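/- Let τ be a left invariant filter on a group G (gU ∈ τ for all g ∈ G, U ∈ τ). A subset A of G is τ-prethick if and only if A is not τ-small. -/
import Mathlib


variable {S : Type*} [Semigroup S]

/-- `g⁻¹A = {x : g*x ∈ A}`. -/
def invImg (g : S) (A : Set S) : Set S := {x | g * x ∈ A}

/-- `F⁻¹A = ⋃_{g∈F} g⁻¹A`. -/
def finvImg (F : Set S) (A : Set S) : Set S := ⋃ g ∈ F, invImg g A

/-- `L` is `τ`-large. -/
def largeTau (τ : Filter S) (L : Set S) : Prop :=
  ∀ U ∈ τ, ∃ F : Finset S, ↑F ⊆ U ∧ finvImg ↑F L ∈ τ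

/-- `A_p = {x : x⁻¹A ∈ p}`. -/
def memImg (p : Ultrafilter S) (A : Set S) : Set S := {x | invImg x A ∈ p}

/-- `T` is `τ`-thick. -/
def thickTau (τ : Filter S) (T : Set S) : Prop :=
  ∃ U ∈ τ, ∀ F : Finset S, ↑F ⊆ U → ∀ V ∈ τ, ∃ x ∈ V, ∀ f ∈ F, f * x ∈ T

/-- `A` is `τ`-prethick. -/
def prethickTau (τ : Filter S) (A : Set S) : Prop :=
  ∀ U ∈ τ, ∃ F : Finset S, ↑F ⊆ U ∧ thickTau τ (finvImg ↑F A)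

/-- `A` is `τ`-small. -/
def smallTau (τ : Filter S) (A : Set S) : Prop :=
  ∀ L, largeTau τ L → largeTau τ (L \ A)

/-- `T` is `τ`-extrathick. -/
def extrathickTau (τ : Filter S) (T : Set S) : Prop :=
  ∀ p : Ultrafilter S, τ ≤ ↑p → memImg p T ∈ τ

/-- Product of ultrafilters: `A ∈ p*q ↔ {x : x⁻¹A ∈ q} ∈ p`. -/
def uMul (p q : Ultrafilter S) : Ultrafilter S :=
  p.bind fun x => q.map fun y => x * y

/-- `τ̄ = {p ∈ βS : τ ⊆ p}`. -/
def tauBar (τ : Filter S) : Set (Ultrafilter S) := {p | τ ≤ ↑p}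

/-- `L` is a left ideal of the subsemigroup `T` of `βS`. -/
def isLeftIdeal (T L : Set (Ultrafilter S)) : Prop :=
  L.Nonempty ∧ L ⊆ T ∧ ∀ q ∈ T, ∀ r ∈ L, uMul q r ∈ L

/-- `L` is a minimal left ideal of `T`. -/
def isMinLeftIdeal (T L : Set (Ultrafilter S)) : Prop :=
  isLeftIdeal T L ∧ ∀ L', isLeftIdeal T L' → L' ⊆ L → L' = L

/-- `M(τ̄)`: union of all minimal left ideals of `τ̄`. -/
def MSet (τ : Filter S) : Set (Ultrafilter S) := ⋃₀ {L | isMinLeftIdeal (tauBar τ) L}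

/-- `Δ_τ(A)`. -/
def DeltaTau (τ : Filter S) (A : Set S) : Set S :=
  {x | ∀ U ∈ τ, ((invImg x A ∩ A) ∩ U).Nonempty}

section Aux

variable {G : Type*} [Group G] {τ : Filter G}

lemma invImg_eq_image (g : G) (A : Set G) : invImg g A = (fun x => g⁻¹ * x) '' A := by
  ext x
  constructor
  · intro h; exact ⟨g * x, h, by group⟩
  · rintro ⟨a, ha, rfl⟩; simpa [invImg] using ha

lemma invImg_mem (hinv : ∀ g : G, ∀ U ∈ τ, (fun x => g * x) '' U ∈ τ)
    {S : Set G} (g : G) (hS : S ∈ τ) : invImg g S ∈ τ := by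
  rw [invImg_eq_image]; exact hinv g⁻¹ S hS

lemma mem_finvImg {F A : Set G} {x : G} : x ∈ finvImg F A ↔ ∃ g ∈ F, g * x ∈ A := by
  simp [finvImg, invImg]

lemma large_smul (hinv : ∀ g : G, ∀ U ∈ τ, (fun x => g * x) '' U ∈ τ)
    {L : Set G} (hL : largeTau τ L) (g : G) : largeTau τ ((fun x => g * x) '' L) := by
  classical
  intro U hU
  obtain ⟨F, hFU, hFL⟩ := hL (invImg g U) (invImg_mem hinv g hU)
  refine ⟨F.image (fun f => g * f), ?_, ?_⟩
  · intro x hx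
    simp only [Finset.coe_image, Set.mem_image] at hx
    obtain ⟨f, hf, rfl⟩ := hx
    exact hFU hf
  · have : finvImg (↑(F.image (fun f => g * f))) ((fun x => g * x) '' L) = finvImg ↑F L := by
      ext x
      simp only [mem_finvImg, Finset.coe_image, Set.mem_image]
      constructor
      · rintro ⟨_, ⟨f, hf, rfl⟩, a, ha, hax⟩
        refine ⟨f, hf, ?_⟩
        have : a = f * x := by
          have := hax
          have h2 : g * a = g * (f * x) := by rw [← mul_assoc]; exact this
          exact mul_left_cancel h2
        rwa [← this]
      · rintro ⟨f, hf, hfx⟩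
        exact ⟨g * f, ⟨f, hf, rfl⟩, f * x, hfx, by rw [mul_assoc]⟩
    rwa [this]

lemma large_invImg (hinv : ∀ g : G, ∀ U ∈ τ, (fun x => g * x) '' U ∈ τ)
    {L : Set G} (hL : largeTau τ L) (g : G) : largeTau τ (invImg g L) := by
  rw [invImg_eq_image]; exact large_smul hinv hL g⁻¹

lemma large_univ [τ.NeBot] : largeTau τ (Set.univ : Set G) := by
  intro U hU
  obtain ⟨u, hu⟩ := Filter.nonempty_of_mem hU
  refine ⟨{u}, by simpa using hu, ?_⟩
  refine Filter.mem_of_superset Filter.univ_mem ?_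
  intro x _
  exact mem_finvImg.mpr ⟨u, by simp, trivial⟩

lemma not_thick_of_large_compl {T : Set G} (h : largeTau τ Tᶜ) : ¬ thickTau τ T := by
  rintro ⟨U₀, hU₀, hth⟩
  obtain ⟨F, hFU, hFT⟩ := h U₀ hU₀
  obtain ⟨x, hx, hall⟩ := hth F hFU _ hFT
  obtain ⟨f, hf, hfx⟩ := mem_finvImg.mp hx
  exact hfx (hall f hf)

end Aux

theorem stmt13 {G : Type*} [Group G] (τ : Filter G) [τ.NeBot]
    (hinv : ∀ g : G, ∀ U ∈ τ, (fun x => g * x) '' U ∈ τ) (A : Set G) :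
    prethickTau τ A ↔ ¬ smallTau τ A := by
  classical
  constructor
  · -- prethick → ¬ small
    intro hpre hsmall
    have key : ∀ F : Finset G, largeTau τ (finvImg (↑F) A)ᶜ := by
      intro F
      induction F using Finset.induction_on with
      | empty =>
        have h0 : (finvImg (↑(∅ : Finset G)) A)ᶜ = (Set.univ : Set G) := by
          simp [finvImg]
        rw [h0]; exact large_univ
      | @insert a F _ ih =>
        have hset : (finvImg (↑(insert a F)) A)ᶜ =
            invImg a (((fun x => a * x) '' (finvImg (↑F) A)ᶜ) \ A) := by
          ext x
          simp only [Set.mem_compl_iff, mem_finvImg, invImg, Set.mem_setOf_eq,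
            Set.mem_diff, Set.mem_image, Finset.coe_insert, Set.mem_insert_iff]
          constructor
          · intro h
            refine ⟨⟨x, ?_, rfl⟩, fun hA => h ⟨a, Or.inl rfl, hA⟩⟩
            rintro ⟨f, hf, hfx⟩
            exact h ⟨f, Or.inr hf, hfx⟩
          · rintro ⟨⟨y, hy, hyx⟩, hA⟩ ⟨g, hg | hg, hgx⟩
            · exact hA (hg ▸ hgx)
            · have hyx' : y = x := mul_left_cancel hyx
              subst hyx'
              exact hy ⟨g, hg, hgx⟩
        rw [hset]
        exact large_invImg hinv (hsmall _ (large_smul hinv ih a)) a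
    obtain ⟨F, -, hthick⟩ := hpre Set.univ Filter.univ_mem
    exact not_thick_of_large_compl (key F) hthick
  · -- ¬ small → prethick
    intro hns
    rw [smallTau] at hns; push_neg at hns
    obtain ⟨L, hL, hnl⟩ := hns
    rw [largeTau] at hnl; push_neg at hnl
    obtain ⟨V, hV, hnlV⟩ := hnl
    intro U hU
    obtain ⟨F, hFUV, hFL⟩ := hL (U ∩ V) (Filter.inter_mem hU hV)
    refine ⟨F, fun x hx => (hFUV hx).1, ?_⟩
    refine ⟨⋂ f ∈ F, invImg f V, (Filter.biInter_finset_mem F).mpr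
      (fun f _ => invImg_mem hinv f hV), ?_⟩
    intro F'' hF'' W hW
    set H : Finset G := Finset.image₂ (· * ·) F F'' with hHdef
    have hHV : (↑H : Set G) ⊆ V := by
      intro h hh
      rw [hHdef] at hh
      simp only [Finset.coe_image₂, Set.mem_image2] at hh
      obtain ⟨f, hf, f'', hf'', rfl⟩ := hh
      have := hF'' hf''
      have h2 : f'' ∈ invImg f V := by
        exact Set.mem_iInter₂.mp this f hf
      exact h2
    have hHnot : finvImg (↑H) (L \ A) ∉ τ := hnlV H hHV
    have hN : (⋂ f'' ∈ F'', invImg f'' (finvImg (↑F) L)) ∈ τ :=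
      (Filter.biInter_finset_mem F'').mpr (fun f'' _ => invImg_mem hinv f'' hFL)
    have hM : W ∩ (⋂ f'' ∈ F'', invImg f'' (finvImg (↑F) L)) ∈ τ :=
      Filter.inter_mem hW hN
    have hex : ∃ x ∈ W ∩ (⋂ f'' ∈ F'', invImg f'' (finvImg (↑F) L)),
        x ∉ finvImg (↑H) (L \ A) := by
      by_contra hcon
      push_neg at hcon
      exact hHnot (Filter.mem_of_superset hM hcon)
    obtain ⟨x, hxM, hxH⟩ := hex
    refine ⟨x, hxM.1, ?_⟩
    intro f'' hf''
    have hx2 : f'' * x ∈ finvImg (↑F) L := Set.mem_iInter₂.mp hxM.2 f'' hf''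
    obtain ⟨f, hf, hfx⟩ := mem_finvImg.mp hx2
    have hmem : (f * f'') * x ∈ L := by rw [mul_assoc]; exact hfx
    have hfH : f * f'' ∈ H := by
      rw [hHdef]; exact Finset.mem_image₂.mpr ⟨f, hf, f'', hf'', rfl⟩
    have hnot : (f * f'') * x ∉ L \ A := fun hmem' =>
      hxH (mem_finvImg.mpr ⟨f * f'', hfH, hmem'⟩)
    have hA : (f * f'') * x ∈ A := by
      by_contra hAc
      exact hnot ⟨hmem, hAc⟩
    exact mem_finvImg.mpr ⟨f, hf, by rw [← mul_assoc]; exact hA⟩
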